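/- arXiv:1710.03495 — 3 statements merged into one kernel-verified Lean document; each statement's English description precedes it below -/
import Mathlib

section
/- Let s,t ∈ (0,1) with 2s+2t > 3, let μ > 0, and let g satisfy (g0)–(g3). If a sequence {u_n} ⊂ H^s(ℝ³) satisfies sup_n |I_μ(u_n)| < ∞ and G_μ(u_n) → 0 as n → ∞, then {u_n} is bounded in H^s(ℝ³), i.e., sup_n ‖u_n‖ < ∞. -/
open MeasureTheory Filter Set

noncomputable section

abbrev E3 : Type := EuclideanSpace ℝ (Fin 3)

/-- The squared Gagliardo seminorm `[u]_s²`. -/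
def gagSq (s : ℝ) (u : E3 → ℝ) : ℝ :=
  ∫ x : E3, ∫ y : E3, (u x - u y) ^ 2 / ‖x - y‖ ^ (3 + 2 * s)

/-- Membership in the fractional Sobolev space `H^s(ℝ³)`. -/
def MemHs (s : ℝ) (u : E3 → ℝ) : Prop :=
  MemLp u 2 volume ∧
    (∫⁻ x : E3, ∫⁻ y : E3,
      ENNReal.ofReal ((u x - u y) ^ 2 / ‖x - y‖ ^ (3 + 2 * s))) < ⊤

/-- The squared `H^s` norm: `‖u‖² = [u]_s² + ‖u‖_{L²}²`. -/
def hsNormSq (s : ℝ) (u : E3 → ℝ) : ℝ := gagSq s u + ∫ x : E3, (u x) ^ 2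

/-- The `H^s` norm. -/
def hsNorm (s : ℝ) (u : E3 → ℝ) : ℝ := Real.sqrt (hsNormSq s u)

/-- The constant `c_t = π^{-3/2} 2^{-2t} Γ((3-2t)/2)/Γ(t)`. -/
def ct (t : ℝ) : ℝ :=
  Real.pi ^ (-(3 : ℝ) / 2) * (2 : ℝ) ^ (-(2 * t)) *
    Real.Gamma ((3 - 2 * t) / 2) / Real.Gamma t

/-- `φ_u^t(x) = c_t ∫ u(y)²/|x-y|^{3-2t} dy`. -/
def phit (t : ℝ) (u : E3 → ℝ) (x : E3) : ℝ :=
  ct t * ∫ y : E3, (u y) ^ 2 / ‖x - y‖ ^ (3 - 2 * t)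

/-- `G(τ) = ∫₀^τ g`. -/
def Gprim (g : ℝ → ℝ) (τ : ℝ) : ℝ := ∫ σ in (0 : ℝ)..τ, g σ

/-- The energy functional `I_μ`. -/
def Ienergy (s t μ : ℝ) (g : ℝ → ℝ) (u : E3 → ℝ) : ℝ :=
  (1 / 2) * gagSq s u + (μ / 2) * (∫ x : E3, (u x) ^ 2)
    + (1 / 4) * (∫ x : E3, phit t u x * (u x) ^ 2)
    - ∫ x : E3, Gprim g (u x)

/-- The Nehari–Pohozaev functional `G_μ`. -/
def Gfunc (s t μ : ℝ) (g : ℝ → ℝ) (u : E3 → ℝ) : ℝ :=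
  ((4 * s + 2 * t - 3) / 2) * gagSq s u
    + ((2 * s + 2 * t - 3) / 2) * μ * (∫ x : E3, (u x) ^ 2)
    + ((4 * s + 2 * t - 3) / 4) * (∫ x : E3, phit t u x * (u x) ^ 2)
    + ∫ x : E3, (3 * Gprim g (u x) - (s + t) * g (u x) * u x)

/-- `u` is a weak solution of `(-Δ)^s u + μ u + φ_u^t u = g(u)` in `ℝ³`. -/
def IsWeakSol (s t μ : ℝ) (g : ℝ → ℝ) (u : E3 → ℝ) : Prop :=
  ∀ v : E3 → ℝ, MemHs s v →
    (∫ x : E3, ∫ y : E3, (u x - u y) * (v x - v y) / ‖x - y‖ ^ (3 + 2 * s))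
      + μ * (∫ x : E3, u x * v x)
      + (∫ x : E3, phit t u x * u x * v x)
      = ∫ x : E3, g (u x) * v x

/-- The hypotheses (g0)–(g3) on the nonlinearity `g`, with parameters `lam`, `q`. -/
def GHyp (s t : ℝ) (g : ℝ → ℝ) (lam q : ℝ) : Prop :=
  ContDiff ℝ 1 g ∧ (∀ τ ≤ (0 : ℝ), g τ = 0) ∧
  Tendsto (fun τ => g τ / τ) (nhdsWithin 0 (Ioi 0)) (nhds 0) ∧
  Tendsto (fun τ => deriv g τ / τ ^ (6 / (3 - 2 * s) - 2)) atTop (nhds 0) ∧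
  0 < lam ∧ (4 * s + 2 * t) / (s + t) < q ∧ q < 6 / (3 - 2 * s) ∧
  (∀ τ : ℝ, 0 ≤ τ → lam * τ ^ (q - 1) ≤ g τ) ∧
  MonotoneOn (fun τ => g τ / τ ^ (q - 1)) (Ioi 0)


/-- Auxiliary: `Gprim g τ = 0` for `τ ≤ 0` when `g` vanishes on nonpositives. -/
lemma Gprim_eq_zero_of_nonpos {g : ℝ → ℝ} (h0 : ∀ τ ≤ (0 : ℝ), g τ = 0)
    {τ : ℝ} (hτ : τ ≤ 0) : Gprim g τ = 0 := by
  have : ∫ σ in τ..(0:ℝ), g σ = ∫ σ in τ..(0:ℝ), (0:ℝ) := by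
    apply intervalIntegral.integral_congr
    intro σ hσ
    rw [Set.uIcc_of_le hτ] at hσ
    exact h0 σ hσ.2
  have h2 : ∫ σ in τ..(0:ℝ), g σ = 0 := by simpa using this
  simp only [Gprim]
  rw [intervalIntegral.integral_symm τ 0, h2, neg_zero]

/-- Auxiliary: nonnegativity of the primitive. -/
lemma Gprim_nonneg {g : ℝ → ℝ} (h0 : ∀ τ ≤ (0 : ℝ), g τ = 0)
    (hpos : ∀ σ : ℝ, 0 ≤ σ → 0 ≤ g σ) (τ : ℝ) : 0 ≤ Gprim g τ := by
  rcases le_or_gt τ 0 with hτ | hτ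
  · rw [Gprim_eq_zero_of_nonpos h0 hτ]
  · exact intervalIntegral.integral_nonneg hτ.le (fun σ hσ => hpos σ hσ.1)

/-- Auxiliary: the Ambrosetti–Rabinowitz type inequality `q G(τ) ≤ g(τ) τ`
from the monotonicity assumption (g3). -/
lemma q_Gprim_le {g : ℝ → ℝ} {q : ℝ} (hgC : Continuous g)
    (h0 : ∀ τ ≤ (0 : ℝ), g τ = 0) (hq : 1 < q)
    (hmono : MonotoneOn (fun τ => g τ / τ ^ (q - 1)) (Ioi 0)) (τ : ℝ) :
    q * Gprim g τ ≤ g τ * τ := by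
  rcases le_or_gt τ 0 with hτ | hτ
  · rw [Gprim_eq_zero_of_nonpos h0 hτ, h0 τ hτ]; simp
  · set c : ℝ := g τ / τ ^ (q - 1) with hc
    have hq1 : (0:ℝ) < q - 1 := by linarith
    have hτq : (0:ℝ) < τ ^ (q - 1) := Real.rpow_pos_of_pos hτ _
    have hle : Gprim g τ ≤ ∫ σ in (0:ℝ)..τ, c * σ ^ (q - 1) := by
      apply intervalIntegral.integral_mono_on hτ.le
        (hgC.intervalIntegrable 0 τ)
        ((continuous_const.mul (Real.continuous_rpow_const hq1.le)).intervalIntegrable 0 τ)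
      intro σ hσ
      rcases eq_or_lt_of_le hσ.1 with h | h
      · rw [← h, h0 0 le_rfl]; simp only [Pi.mul_apply]; rw [Real.zero_rpow (ne_of_gt hq1), mul_zero]
      · have hmem : σ ∈ Ioi (0:ℝ) := h
        have := hmono hmem (Set.mem_Ioi.mpr hτ) hσ.2
        have hσq : (0:ℝ) < σ ^ (q - 1) := Real.rpow_pos_of_pos h _
        calc g σ = g σ / σ ^ (q - 1) * σ ^ (q - 1) := by field_simp
          _ ≤ c * σ ^ (q - 1) := by
              exact mul_le_mul_of_nonneg_right this hσq.le
    have hval : ∫ σ in (0:ℝ)..τ, c * σ ^ (q - 1) = c * (τ ^ q / q) := by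
      rw [intervalIntegral.integral_const_mul, integral_rpow (Or.inl (by linarith))]
      rw [sub_add_cancel, Real.zero_rpow (by linarith : q ≠ 0)]
      ring
    have hτpow : τ ^ q = τ ^ (q - 1) * τ := by
      have h := Real.rpow_add hτ (q - 1) 1
      rw [Real.rpow_one, sub_add_cancel] at h
      exact h
    have hGle : Gprim g τ ≤ c * (τ ^ q / q) := hval ▸ hle
    have hqpos : (0:ℝ) < q := by linarith
    have : q * Gprim g τ ≤ c * τ ^ q := by
      have := mul_le_mul_of_nonneg_left hGle hqpos.le
      calc q * Gprim g τ ≤ q * (c * (τ ^ q / q)) := this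
        _ = c * τ ^ q := by field_simp
    calc q * Gprim g τ ≤ c * τ ^ q := this
      _ = g τ * τ := by rw [hc, hτpow]; field_simp

/-- Auxiliary: continuity of the primitive. -/
lemma continuous_Gprim {g : ℝ → ℝ} (hgC : Continuous g) : Continuous (Gprim g) :=
  intervalIntegral.continuous_primitive (fun a b => hgC.intervalIntegrable a b) 0

/-- Auxiliary: nonnegativity of the Gagliardo seminorm. -/
lemma gagSq_nonneg (s : ℝ) (u : E3 → ℝ) : 0 ≤ gagSq s u := by
  apply integral_nonneg
  intro x
  apply integral_nonneg
  intro y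
  exact div_nonneg (sq_nonneg _) (Real.rpow_nonneg (norm_nonneg _) _)

/-- Auxiliary: nonnegativity of the Riesz potential constant. -/
lemma ct_nonneg {t : ℝ} (ht : t ∈ Ioo (0:ℝ) 1) : 0 ≤ ct t := by
  apply div_nonneg _ (Real.Gamma_pos_of_pos ht.1).le
  apply mul_nonneg
  apply mul_nonneg
  · exact Real.rpow_nonneg Real.pi_pos.le _
  · exact Real.rpow_nonneg (by norm_num) _
  · exact (Real.Gamma_pos_of_pos (by have := ht.2; linarith)).le

/-- Auxiliary: nonnegativity of `φ_u^t`. -/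
lemma phit_nonneg {t : ℝ} (ht : t ∈ Ioo (0:ℝ) 1) (u : E3 → ℝ) (x : E3) :
    0 ≤ phit t u x := by
  apply mul_nonneg (ct_nonneg ht)
  apply integral_nonneg
  intro y
  exact div_nonneg (sq_nonneg _) (Real.rpow_nonneg (norm_nonneg _) _)

set_option maxHeartbeats 1000000

/-- sequences with bounded energy and vanishing
Nehari–Pohozaev functional are bounded in `H^s(ℝ³)`. -/
theorem bounded_of_energy_bounded (s t μ : ℝ) (hs : s ∈ Ioo (0 : ℝ) 1)
    (ht : t ∈ Ioo (0 : ℝ) 1) (hst : 3 < 2 * s + 2 * t) (hμ : 0 < μ)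
    (g : ℝ → ℝ) (lam q : ℝ) (hg : GHyp s t g lam q)
    (u : ℕ → E3 → ℝ) (hu : ∀ n, MemHs s (u n))
    (hI : ∃ M : ℝ, ∀ n, |Ienergy s t μ g (u n)| ≤ M)
    (hG : Tendsto (fun n => Gfunc s t μ g (u n)) atTop (nhds 0)) :
    ∃ M : ℝ, ∀ n, hsNorm s (u n) ≤ M := by
  obtain ⟨hgC, hg0', _, _, hlam, hqlo, hqhi, hgel, hmono⟩ := hg
  obtain ⟨M, hM⟩ := hI
  -- bound for Gfunc
  have habs : Tendsto (fun n => |Gfunc s t μ g (u n)|) atTop (nhds 0) := by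
    simpa using hG.abs
  obtain ⟨M', hM'mem⟩ := habs.bddAbove_range
  have hM' : ∀ n, |Gfunc s t μ g (u n)| ≤ M' := fun n => hM'mem ⟨n, rfl⟩
  have hM'0 : 0 ≤ M' := le_trans (abs_nonneg _) (hM' 0)
  have hM0 : 0 ≤ M := le_trans (abs_nonneg _) (hM 0)
  -- basic positivity facts
  have hs0 := hs.1
  have ht0 := ht.1
  have hstpos : (0:ℝ) < s + t := by linarith
  have hq_gt : 4 * s + 2 * t < (s + t) * q := by
    have := (div_lt_iff₀ hstpos).mp hqlo
    linarith
  have h3 : (3:ℝ) < 4 * s + 2 * t := by linarith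
  have hq2 : (2:ℝ) < q := by
    have h2' : (s + t) * 2 < (s + t) * q := by linarith
    exact (mul_lt_mul_iff_right₀ hstpos).mp h2'
  set c : ℝ := (s + t) * q - 3 with hcdef
  have hcpos : 0 < c := by simp only [hcdef]; linarith
  clear_value c
  have hα : (0:ℝ) < ((s + t) * q - 4 * s - 2 * t) / 2 := by linarith
  have hβ : (0:ℝ) < ((s + t) * q - 2 * s - 2 * t) / 2 := by linarith
  have hc1 : (0:ℝ) < (4 * s + 2 * t - 3) / 2 := by linarith
  have hc2 : (0:ℝ) < (2 * s + 2 * t - 3) / 2 := by linarith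
  -- pointwise properties of g and its primitive
  have hgpos : ∀ σ : ℝ, 0 ≤ σ → 0 ≤ g σ := by
    intro σ hσ
    exact le_trans (mul_nonneg hlam.le (Real.rpow_nonneg hσ _)) (hgel σ hσ)
  have hGnn : ∀ τ : ℝ, 0 ≤ Gprim g τ := Gprim_nonneg hg0' hgpos
  have hqG : ∀ τ : ℝ, q * Gprim g τ ≤ g τ * τ :=
    q_Gprim_le hgC.continuous hg0' (by linarith) hmono
  have hpt : ∀ τ : ℝ, 3 * Gprim g τ - (s + t) * g τ * τ ≤ -c * Gprim g τ := by
    intro τ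
    have h1 := mul_le_mul_of_nonneg_left (hqG τ) hstpos.le
    simp only [hcdef]
    linarith [h1, hGnn τ]
  -- the bounds
  set KA : ℝ := max ((c * M + M') / (((s + t) * q - 4 * s - 2 * t) / 2))
      (M' / ((4 * s + 2 * t - 3) / 2)) with hKA
  set KB : ℝ := max ((c * M + M') / ((((s + t) * q - 2 * s - 2 * t) / 2) * μ))
      (M' / (((2 * s + 2 * t - 3) / 2) * μ)) with hKB
  refine ⟨Real.sqrt (KA + KB), fun n => ?_⟩
  -- abbreviations
  set An := gagSq s (u n) with hAn
  set Bn := ∫ x : E3, (u n x) ^ 2 with hBn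
  set Cn := ∫ x : E3, phit t (u n) x * (u n x) ^ 2 with hCn
  set Nn := ∫ x : E3, Gprim g (u n x) with hNn
  set Hn := ∫ x : E3, (3 * Gprim g (u n x) - (s + t) * g (u n x) * u n x) with hHn
  have hAnn : 0 ≤ An := gagSq_nonneg s (u n)
  have hBnn : 0 ≤ Bn := integral_nonneg (fun x => sq_nonneg _)
  have hCnn : 0 ≤ Cn :=
    integral_nonneg (fun x => mul_nonneg (phit_nonneg ht (u n) x) (sq_nonneg _))
  have hYeq : Ienergy s t μ g (u n) = 1/2 * An + μ/2 * Bn + 1/4 * Cn - Nn := by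
    simp only [Ienergy, ← hAn, ← hBn, ← hCn, ← hNn]
  have hXeq : Gfunc s t μ g (u n) =
      (4 * s + 2 * t - 3) / 2 * An + (2 * s + 2 * t - 3) / 2 * μ * Bn
        + (4 * s + 2 * t - 3) / 4 * Cn + Hn := by
    simp only [Gfunc, ← hAn, ← hBn, ← hCn, ← hHn]
  have hY := abs_le.mp (hM n)
  have hX := abs_le.mp (hM' n)
  clear_value An Bn Cn Nn Hn
  have hmain : An ≤ KA ∧ Bn ≤ KB := by
    by_cases hint : Integrable
        (fun x => 3 * Gprim g (u n x) - (s + t) * g (u n x) * u n x) volume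
    · -- nonlinear term integrable: use c·I − G
      have humeas := (hu n).1.aestronglyMeasurable
      have hGmeas : AEStronglyMeasurable (fun x => Gprim g (u n x)) volume :=
        (continuous_Gprim hgC.continuous).comp_aestronglyMeasurable humeas
      have hcGint : Integrable (fun x => c * Gprim g (u n x)) volume := by
        apply hint.neg.mono (hGmeas.const_mul c)
        apply ae_of_all
        intro x
        have h1 : 0 ≤ c * Gprim g (u n x) := mul_nonneg hcpos.le (hGnn _)
        have h2 : c * Gprim g (u n x) ≤
            -(3 * Gprim g (u n x) - (s + t) * g (u n x) * u n x) := by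
          have := hpt (u n x); linarith
        rw [Real.norm_eq_abs, Real.norm_eq_abs, abs_of_nonneg h1]
        exact le_trans h2 (le_abs_self _)
      have hGint : Integrable (fun x => Gprim g (u n x)) volume := by
        have := hcGint.const_mul c⁻¹
        have heq : (fun x => c⁻¹ * (c * Gprim g (u n x)))
            = fun x => Gprim g (u n x) := by
          funext x; field_simp
        rwa [heq] at this
      have hHle : Hn ≤ -c * Nn := by
        have h1 : Hn ≤ ∫ x : E3, -c * Gprim g (u n x) := by
          rw [hHn]
          apply integral_mono hint (hGint.const_mul (-c))
          intro x
          exact hpt (u n x)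
        rw [integral_const_mul, ← hNn] at h1
        exact h1
      have key : ((s + t) * q - 4 * s - 2 * t) / 2 * An
          + ((s + t) * q - 2 * s - 2 * t) / 2 * μ * Bn ≤ c * M + M' := by
        have e1 : c * Ienergy s t μ g (u n) - Gfunc s t μ g (u n)
            = ((s + t) * q - 4 * s - 2 * t) / 2 * An
              + ((s + t) * q - 2 * s - 2 * t) / 2 * μ * Bn
              + ((s + t) * q - 4 * s - 2 * t) / 4 * Cn + (-c * Nn - Hn) := by
          rw [hYeq, hXeq]; simp only [hcdef]; ring
        have h4 : c * Ienergy s t μ g (u n) ≤ c * M :=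
          mul_le_mul_of_nonneg_left hY.2 hcpos.le
        have h5 : 0 ≤ ((s + t) * q - 4 * s - 2 * t) / 4 * Cn :=
          mul_nonneg (by linarith) hCnn
        linarith [e1, h4, h5, hX.1, hHle]
      constructor
      · apply le_trans _ (le_max_left _ _)
        rw [le_div_iff₀ hα]
        linarith [key, mul_nonneg (mul_nonneg hβ.le hμ.le) hBnn]
      · apply le_trans _ (le_max_left _ _)
        rw [le_div_iff₀ (mul_pos hβ hμ)]
        linarith [key, mul_nonneg hα.le hAnn]
    · -- nonlinear term not integrable: junk value 0, so G_μ is a sum of positives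
      have hH0 : Hn = 0 := by rw [hHn]; exact integral_undef hint
      have key : (4 * s + 2 * t - 3) / 2 * An
          + (2 * s + 2 * t - 3) / 2 * μ * Bn ≤ M' := by
        have h5 : 0 ≤ (4 * s + 2 * t - 3) / 4 * Cn := mul_nonneg (by linarith) hCnn
        rw [hXeq, hH0] at hX
        linarith [hX.2, h5]
      constructor
      · apply le_trans _ (le_max_right _ _)
        rw [le_div_iff₀ hc1]
        linarith [key, mul_nonneg (mul_nonneg hc2.le hμ.le) hBnn]
      · apply le_trans _ (le_max_right _ _)
        rw [le_div_iff₀ (mul_pos hc2 hμ)]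
        linarith [key, mul_nonneg hc1.le hAnn]
  have : hsNormSq s (u n) ≤ KA + KB := by
    simp only [hsNormSq, ← hAn, ← hBn]
    linarith [hmain.1, hmain.2]
  calc hsNorm s (u n) = Real.sqrt (hsNormSq s (u n)) := rfl
    _ ≤ Real.sqrt (KA + KB) := Real.sqrt_le_sqrt this
end
end

section
/- Let s ∈ (0,1) and let φ:ℝ³→ℝ be a Lipschitz function with compact support. Then ∫_{ℝ³} ( ∫_{ℝ³} |φ(z)−φ(y)|² / ‖z−y‖^{3+2s} dy )^{3/(2s)} dz < ∞. -/
open Set MeasureTheory Metric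
open scoped ENNReal NNReal

noncomputable section

lemma finrank_E3 : Module.finrank ℝ E3 = 3 := finrank_euclideanSpace_fin

lemma lintegral_norm_E3 (g : ℝ → ℝ≥0∞) (hg : Measurable g) :
    ∫⁻ x : E3, g ‖x‖ = (volume : Measure E3).toSphere univ *
      ∫⁻ r in Ioi (0:ℝ), ENNReal.ofReal (r ^ 2) * g r := by
  have h0 : (∫⁻ x : ({(0:E3)}ᶜ : Set E3), g ‖x.1‖ ∂((volume : Measure E3).comap Subtype.val)) =
      ∫⁻ x : E3, g ‖x‖ := by
    rw [lintegral_subtype_comap (measurableSet_singleton (0:E3)).compl (fun x => g ‖x‖),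
      MeasureTheory.restrict_compl_singleton]
  have hf : Measurable (fun p : sphere (0:E3) 1 × Ioi (0:ℝ) => g p.2.1) :=
    hg.comp (measurable_subtype_coe.comp measurable_snd)
  have h1 := (Measure.measurePreserving_homeomorphUnitSphereProd
    (volume : Measure E3)).lintegral_comp hf
  have h2 : (∫⁻ x : ({(0:E3)}ᶜ : Set E3), g ‖x.1‖ ∂((volume : Measure E3).comap Subtype.val)) =
      ∫⁻ p : sphere (0:E3) 1 × Ioi (0:ℝ), g p.2.1
        ∂((volume : Measure E3).toSphere.prod (.volumeIoiPow (Module.finrank ℝ E3 - 1))) := by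
    simpa only [homeomorphUnitSphereProd_apply_snd_coe] using h1
  have hins : (∫⁻ y : Ioi (0:ℝ), g y.1 ∂(Measure.volumeIoiPow (Module.finrank ℝ E3 - 1))) =
      ∫⁻ r in Ioi (0:ℝ), ENNReal.ofReal (r ^ 2) * g r := by
    have hdim : Module.finrank ℝ E3 - 1 = 2 := by rw [finrank_E3]
    have hmg : Measurable fun y : Ioi (0:ℝ) => g y.1 := hg.comp measurable_subtype_coe
    have hmd : Measurable fun r : Ioi (0:ℝ) => ENNReal.ofReal (r.1 ^ 2) := by fun_prop
    rw [hdim, Measure.volumeIoiPow, lintegral_withDensity_eq_lintegral_mul _ hmd hmg]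
    exact lintegral_subtype_comap measurableSet_Ioi (fun r => ENNReal.ofReal (r ^ 2) * g r)
  rw [← h0, h2, lintegral_prod _ hf.aemeasurable]
  simp only [hins, lintegral_const]
  rw [mul_comm]

lemma radial_lt_top (s c d : ℝ) (hs0 : 0 < s) (hs1 : s < 1) (hc : 0 ≤ c) (hd : 0 ≤ d) :
    (∫⁻ w : E3, ENNReal.ofReal (min (c * ‖w‖ ^ 2) d / ‖w‖ ^ (3 + 2 * s))) < ⊤ := by
  set g : ℝ → ℝ≥0∞ := fun r => ENNReal.ofReal (min (c * r ^ 2) d / r ^ (3 + 2 * s)) with hgdef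
  have hg : Measurable g := by
    apply Measurable.ennreal_ofReal
    fun_prop
  rw [show (∫⁻ w : E3, ENNReal.ofReal (min (c * ‖w‖ ^ 2) d / ‖w‖ ^ (3 + 2 * s)))
      = ∫⁻ w : E3, g ‖w‖ from rfl, lintegral_norm_E3 g hg]
  refine ENNReal.mul_lt_top (measure_lt_top _ _) ?_
  calc ∫⁻ r in Ioi (0:ℝ), ENNReal.ofReal (r ^ 2) * g r
      ≤ ∫⁻ r in Ioc (0:ℝ) 1 ∪ Ioi 1, ENNReal.ofReal (r ^ 2) * g r :=
        lintegral_mono_set Ioi_subset_Ioc_union_Ioi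
    _ ≤ (∫⁻ r in Ioc (0:ℝ) 1, ENNReal.ofReal (r ^ 2) * g r)
        + ∫⁻ r in Ioi (1:ℝ), ENNReal.ofReal (r ^ 2) * g r := lintegral_union_le _ _ _
    _ < ⊤ := ENNReal.add_lt_top.2 ⟨?_, ?_⟩
  · -- near 0
    have hb : ∀ r ∈ Ioc (0:ℝ) 1, ENNReal.ofReal (r ^ 2) * g r
        ≤ ENNReal.ofReal (c * r ^ (1 - 2 * s)) := by
      intro r hr
      have hr0 : 0 < r := hr.1
      rw [hgdef, ← ENNReal.ofReal_mul (by positivity)]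
      apply ENNReal.ofReal_le_ofReal
      have hrp : (0:ℝ) < r ^ (3 + 2 * s) := Real.rpow_pos_of_pos hr0 _
      have key : r ^ (2:ℕ) * (c * r ^ (2:ℕ) / r ^ (3 + 2 * s)) = c * r ^ (1 - 2 * s) := by
        rw [show r ^ (1 - 2*s) = r ^ ((4:ℝ) - (3 + 2*s)) by ring_nf,
          Real.rpow_sub hr0, show ((4:ℝ)) = ((4:ℕ):ℝ) by norm_num, Real.rpow_natCast]
        field_simp
      calc r ^ 2 * (min (c * r ^ 2) d / r ^ (3 + 2 * s))
          ≤ r ^ 2 * (c * r ^ 2 / r ^ (3 + 2 * s)) := by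
            gcongr
            exact min_le_left _ _
        _ = c * r ^ (1 - 2 * s) := key
    refine lt_of_le_of_lt (setLIntegral_mono' measurableSet_Ioc hb) ?_
    refine IntegrableOn.setLIntegral_lt_top ?_
    rw [← intervalIntegrable_iff_integrableOn_Ioc_of_le zero_le_one]
    exact (intervalIntegral.intervalIntegrable_rpow' (by linarith)).const_mul c
  · -- far away
    have hb : ∀ r ∈ Ioi (1:ℝ), ENNReal.ofReal (r ^ 2) * g r
        ≤ ENNReal.ofReal (d * r ^ (-1 - 2 * s)) := by
      intro r hr
      have hr0 : (0:ℝ) < r := lt_trans one_pos hr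
      rw [hgdef, ← ENNReal.ofReal_mul (by positivity)]
      apply ENNReal.ofReal_le_ofReal
      have key : r ^ (2:ℕ) * (d / r ^ (3 + 2 * s)) = d * r ^ (-1 - 2 * s) := by
        rw [show r ^ (-1 - 2*s) = r ^ ((2:ℝ) - (3 + 2*s)) by ring_nf,
          Real.rpow_sub hr0, show ((2:ℝ)) = ((2:ℕ):ℝ) by norm_num, Real.rpow_natCast]
        field_simp
      calc r ^ 2 * (min (c * r ^ 2) d / r ^ (3 + 2 * s))
          ≤ r ^ 2 * (d / r ^ (3 + 2 * s)) := by
            gcongr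
            exact min_le_right _ _
        _ = d * r ^ (-1 - 2 * s) := key
    refine lt_of_le_of_lt (setLIntegral_mono' measurableSet_Ioi hb) ?_
    refine IntegrableOn.setLIntegral_lt_top ?_
    exact (integrableOn_Ioi_rpow_of_lt (by linarith) one_pos).const_mul d


/-- for a Lipschitz compactly supported cut-off `φ`, the localized
Gagliardo integral `|D_s φ|²` belongs to `L^{3/(2s)}(ℝ³)`. -/
theorem cutoff_gagliardo_integrable (s : ℝ) (hs : s ∈ Ioo (0 : ℝ) 1)
    (φ : E3 → ℝ) (L : NNReal) (hφ : LipschitzWith L φ)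
    (hsupp : HasCompactSupport φ) :
    (∫⁻ z : E3, (∫⁻ y : E3,
      ENNReal.ofReal ((φ z - φ y) ^ 2 / ‖z - y‖ ^ (3 + 2 * s))) ^ ((3 : ℝ) / (2 * s)))
      < ⊤ := by

  obtain ⟨hs0, hs1⟩ := hs
  obtain ⟨M, hM⟩ := hsupp.exists_bound_of_continuous hφ.continuous
  have hM0 : 0 ≤ M := le_trans (norm_nonneg _) (hM 0)
  have hMabs : ∀ x, |φ x| ≤ M := by intro x; simpa [Real.norm_eq_abs] using hM x
  obtain ⟨R₀, hR₀⟩ := hsupp.isBounded.subset_closedBall (0 : E3)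
  set R : ℝ := max R₀ 0 with hRdef
  have hR : tsupport φ ⊆ closedBall (0:E3) R :=
    hR₀.trans (closedBall_subset_closedBall (le_max_left _ _))
  have hR0 : (0:ℝ) ≤ R := le_max_right _ _
  set t : ℝ := 3 + 2 * s with htdef
  have ht : (0:ℝ) < t := by positivity
  set p : ℝ := (3:ℝ) / (2 * s) with hpdef
  have hp : (0:ℝ) < p := by positivity
  -- the uniform bound K on the inner integral
  set F : E3 → ℝ≥0∞ :=
    fun w => ENNReal.ofReal (min ((L:ℝ) ^ 2 * ‖w‖ ^ 2) (4 * M ^ 2) / ‖w‖ ^ t) with hFdef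
  have hF : Measurable F := by apply Measurable.ennreal_ofReal; fun_prop
  set K : ℝ≥0∞ := ∫⁻ w : E3, F w with hKdef
  have hK : K < ⊤ := radial_lt_top s ((L:ℝ)^2) (4*M^2) hs0 hs1 (by positivity) (by positivity)
  have hinner : ∀ z : E3,
      (∫⁻ y : E3, ENNReal.ofReal ((φ z - φ y) ^ 2 / ‖z - y‖ ^ t)) ≤ K := by
    intro z
    have htr : (∫⁻ y : E3, F (z - y)) = K :=
      (Measure.measurePreserving_sub_left volume z).lintegral_comp hF
    refine le_trans (lintegral_mono fun y => ?_) (le_of_eq htr)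
    apply ENNReal.ofReal_le_ofReal
    rcases eq_or_ne (‖z - y‖) 0 with h0 | h0
    · rw [h0, Real.zero_rpow ht.ne', div_zero, div_zero]
    · have hnp : (0:ℝ) < ‖z - y‖ := lt_of_le_of_ne (norm_nonneg _) (Ne.symm h0)
      have hdp : (0:ℝ) < ‖z - y‖ ^ t := Real.rpow_pos_of_pos hnp _
      gcongr
      refine le_min ?_ ?_
      · have h1 : |φ z - φ y| ≤ (L:ℝ) * ‖z - y‖ := by
          have := hφ.dist_le_mul z y
          rwa [Real.dist_eq, dist_eq_norm] at this
        calc (φ z - φ y) ^ 2 = |φ z - φ y| ^ 2 := (sq_abs _).symm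
          _ ≤ ((L:ℝ) * ‖z - y‖) ^ 2 := by
              apply pow_le_pow_left₀ (abs_nonneg _) h1
          _ = (L:ℝ) ^ 2 * ‖z - y‖ ^ 2 := by ring
      · have h1 : |φ z - φ y| ≤ 2 * M := by
          calc |φ z - φ y| ≤ |φ z| + |φ y| := abs_sub _ _
            _ ≤ 2 * M := by have := hMabs z; have := hMabs y; linarith
        calc (φ z - φ y) ^ 2 = |φ z - φ y| ^ 2 := (sq_abs _).symm
          _ ≤ (2 * M) ^ 2 := by apply pow_le_pow_left₀ (abs_nonneg _) h1
          _ = 4 * M ^ 2 := by ring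
  -- split the outer integral
  rw [← lintegral_add_compl
      (fun z : E3 => (∫⁻ y : E3, ENNReal.ofReal ((φ z - φ y) ^ 2 / ‖z - y‖ ^ t)) ^ p)
      (measurableSet_ball (x := (0:E3)) (ε := 2 * R + 1))]
  refine ENNReal.add_lt_top.2 ⟨?_, ?_⟩
  · -- over the ball
    calc (∫⁻ z in ball (0:E3) (2*R+1),
          (∫⁻ y : E3, ENNReal.ofReal ((φ z - φ y) ^ 2 / ‖z - y‖ ^ t)) ^ p)
        ≤ ∫⁻ _ in ball (0:E3) (2*R+1), K ^ p := by
          refine lintegral_mono fun z => ?_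
          exact ENNReal.rpow_le_rpow (hinner z) hp.le
      _ = K ^ p * volume (ball (0:E3) (2*R+1)) := setLIntegral_const _ _
      _ < ⊤ := ENNReal.mul_lt_top
          (ENNReal.rpow_lt_top_of_nonneg hp.le hK.ne) measure_ball_lt_top
  · -- outside the ball
    set V : ℝ := (volume (closedBall (0:E3) R)).toReal with hVdef
    have hV0 : 0 ≤ V := ENNReal.toReal_nonneg
    have hVeq : volume (closedBall (0:E3) R) = ENNReal.ofReal V :=
      (ENNReal.ofReal_toReal measure_closedBall_lt_top.ne).symm
    have hbd : ∀ z ∈ (ball (0:E3) (2*R+1))ᶜ,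
        (∫⁻ y : E3, ENNReal.ofReal ((φ z - φ y) ^ 2 / ‖z - y‖ ^ t)) ^ p
          ≤ ENNReal.ofReal ((M^2 * 3 ^ t * V) ^ p) *
              ENNReal.ofReal ((1 + ‖z‖) ^ (-(t * p))) := by
      intro z hz
      have hznorm : 2 * R + 1 ≤ ‖z‖ := by
        have := hz
        simp only [mem_compl_iff, mem_ball, dist_zero_right, not_lt] at this
        exact this
      have hφz : φ z = 0 := by
        apply image_eq_zero_of_notMem_tsupport
        intro hzmem
        have := hR hzmem
        rw [mem_closedBall_zero_iff] at this
        linarith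
      have h1z : (0:ℝ) < 1 + ‖z‖ := by positivity
      have step1 : (∫⁻ y : E3, ENNReal.ofReal ((φ z - φ y) ^ 2 / ‖z - y‖ ^ t))
          ≤ ENNReal.ofReal (M^2 * 3 ^ t * (1 + ‖z‖) ^ (-t) * V) := by
        have hptw : ∀ y : E3, ENNReal.ofReal ((φ z - φ y) ^ 2 / ‖z - y‖ ^ t)
            ≤ (closedBall (0:E3) R).indicator
                (fun _ => ENNReal.ofReal (M^2 * 3 ^ t * (1 + ‖z‖) ^ (-t))) y := by
          intro y
          by_cases hy : y ∈ closedBall (0:E3) R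
          · rw [indicator_of_mem hy]
            apply ENNReal.ofReal_le_ofReal
            have hyR : ‖y‖ ≤ R := mem_closedBall_zero_iff.mp hy
            have hlow : (1 + ‖z‖) / 3 ≤ ‖z - y‖ := by
              have h2 : ‖z‖ - ‖y‖ ≤ ‖z - y‖ := norm_sub_norm_le z y
              linarith
            have hlp : (0:ℝ) < (1 + ‖z‖) / 3 := by positivity
            have hdle : ((1 + ‖z‖) / 3) ^ t ≤ ‖z - y‖ ^ t :=
              Real.rpow_le_rpow hlp.le hlow ht.le
            have hdp : (0:ℝ) < ((1 + ‖z‖) / 3) ^ t := Real.rpow_pos_of_pos hlp _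
            have hnum : (φ z - φ y) ^ 2 ≤ M ^ 2 := by
              rw [hφz, zero_sub, neg_sq, ← sq_abs]
              apply pow_le_pow_left₀ (abs_nonneg _) (hMabs y)
            calc (φ z - φ y) ^ 2 / ‖z - y‖ ^ t
                ≤ M ^ 2 / ((1 + ‖z‖) / 3) ^ t :=
                  div_le_div₀ (by positivity) hnum hdp hdle
              _ = M^2 * 3 ^ t * (1 + ‖z‖) ^ (-t) := by
                  rw [Real.div_rpow h1z.le (by norm_num : (0:ℝ) ≤ 3),
                    Real.rpow_neg h1z.le]
                  have h3t : (0:ℝ) < (3:ℝ) ^ t := Real.rpow_pos_of_pos three_pos _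
                  have hzt : (0:ℝ) < (1 + ‖z‖) ^ t := Real.rpow_pos_of_pos h1z _
                  field_simp
          · rw [indicator_of_notMem hy]
            have hφy : φ y = 0 := by
              exact image_eq_zero_of_notMem_tsupport fun hymem => hy (hR hymem)
            simp [hφz, hφy]
        calc (∫⁻ y : E3, ENNReal.ofReal ((φ z - φ y) ^ 2 / ‖z - y‖ ^ t))
            ≤ ∫⁻ y, (closedBall (0:E3) R).indicator
                (fun _ => ENNReal.ofReal (M^2 * 3 ^ t * (1 + ‖z‖) ^ (-t))) y :=
              lintegral_mono hptw
          _ = ENNReal.ofReal (M^2 * 3 ^ t * (1 + ‖z‖) ^ (-t)) *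
                volume (closedBall (0:E3) R) :=
              lintegral_indicator_const measurableSet_closedBall _
          _ = ENNReal.ofReal (M^2 * 3 ^ t * (1 + ‖z‖) ^ (-t) * V) := by
              rw [hVeq, ← ENNReal.ofReal_mul (by positivity)]
      calc (∫⁻ y : E3, ENNReal.ofReal ((φ z - φ y) ^ 2 / ‖z - y‖ ^ t)) ^ p
          ≤ ENNReal.ofReal (M^2 * 3 ^ t * (1 + ‖z‖) ^ (-t) * V) ^ p :=
            ENNReal.rpow_le_rpow step1 hp.le
        _ = ENNReal.ofReal ((M^2 * 3 ^ t * (1 + ‖z‖) ^ (-t) * V) ^ p) :=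
            ENNReal.ofReal_rpow_of_nonneg (by positivity) hp.le
        _ = ENNReal.ofReal ((M^2 * 3 ^ t * V) ^ p) *
              ENNReal.ofReal ((1 + ‖z‖) ^ (-(t * p))) := by
            rw [← ENNReal.ofReal_mul (by positivity)]
            congr 1
            rw [show M^2 * 3 ^ t * (1 + ‖z‖) ^ (-t) * V
                = (M^2 * 3 ^ t * V) * (1 + ‖z‖) ^ (-t) by ring,
              Real.mul_rpow (by positivity) (by positivity),
              ← Real.rpow_mul h1z.le, neg_mul]
    have hexp : ((Module.finrank ℝ E3 : ℝ)) < t * p := by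
      rw [finrank_E3]
      have h2sp : 2 * s * p = 3 := by
        rw [hpdef]; field_simp
      have htp : t * p = 3 * p + 3 := by rw [htdef]; linear_combination h2sp
      rw [htp]; push_cast; linarith
    calc (∫⁻ z in (ball (0:E3) (2*R+1))ᶜ,
          (∫⁻ y : E3, ENNReal.ofReal ((φ z - φ y) ^ 2 / ‖z - y‖ ^ t)) ^ p)
        ≤ ∫⁻ z in (ball (0:E3) (2*R+1))ᶜ,
            ENNReal.ofReal ((M^2 * 3 ^ t * V) ^ p) *
              ENNReal.ofReal ((1 + ‖z‖) ^ (-(t * p))) :=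
          setLIntegral_mono' measurableSet_ball.compl hbd
      _ ≤ ∫⁻ z : E3, ENNReal.ofReal ((M^2 * 3 ^ t * V) ^ p) *
              ENNReal.ofReal ((1 + ‖z‖) ^ (-(t * p))) :=
          setLIntegral_le_lintegral _ _
      _ = ENNReal.ofReal ((M^2 * 3 ^ t * V) ^ p) *
            ∫⁻ z : E3, ENNReal.ofReal ((1 + ‖z‖) ^ (-(t * p))) := by
          rw [lintegral_const_mul]
          fun_prop
      _ < ⊤ := ENNReal.mul_lt_top ENNReal.ofReal_lt_top
          (finite_integral_one_add_norm hexp)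
end
end

section
/- Let s ∈ (0,1) and set p = 6/(3−2s), p′ = 6/(3+2s). Suppose K ∈ L^{p′}(ℝ³) is nonnegative and measurable, and (h_i)_{i∈ℕ} are measurable functions on ℝ³ with sup_i ‖h_i‖_{L^∞} ≤ M < ∞, h_i ∈ L^{p}(ℝ³) for each i, and h_i → h in L^{p}(ℝ³) for some h ∈ L^{p}(ℝ³). Assume moreover K(x) ≤ C‖x‖^{−(3+2s)} for all x ≠ 0. Then for every δ > 0 there exists R > 0 such that for all i ∈ ℕ and all z ∈ ℝ³ with ‖z‖ ≥ R: ∫_{ℝ³} K(z−y)|h_i(y)| dy ≤ δ; in particular, the functions w_i(z) = ∫ K(z−y)h_i(y) dy satisfy lim_{‖z‖→∞} w_i(z) = 0 uniformly in i. -/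
open Set MeasureTheory Filter

noncomputable section

open scoped ENNReal

/-- Hölder's inequality for a translated kernel against a function. -/
lemma aux_holder {p q : ℝ} (hpq : p.HolderConjugate q)
    (f g : E3 → ℝ) (hf : Measurable f) (hg : Measurable g) (z : E3) :
    (∫⁻ y : E3, (‖f (z - y)‖₊ : ℝ≥0∞) * ‖g y‖₊) ≤
      eLpNorm f (ENNReal.ofReal p) volume * eLpNorm g (ENNReal.ofReal q) volume := by
  have hfz : Measurable fun y : E3 => f (z - y) := hf.comp (measurable_const.sub measurable_id)
  have H := ENNReal.lintegral_mul_le_Lp_mul_Lq (volume : Measure E3) hpq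
    hfz.nnnorm.coe_nnreal_ennreal.aemeasurable hg.nnnorm.coe_nnreal_ennreal.aemeasurable
  simp only [Pi.mul_apply] at H
  have htrans : (∫⁻ y : E3, (‖f (z - y)‖₊ : ℝ≥0∞) ^ p) = ∫⁻ x : E3, (‖f x‖₊ : ℝ≥0∞) ^ p :=
    (MeasureTheory.Measure.measurePreserving_sub_left volume z).lintegral_comp
      (hf.nnnorm.coe_nnreal_ennreal.pow_const p)
  rw [htrans] at H
  have hp0 : ENNReal.ofReal p ≠ 0 := by
    simp [ENNReal.ofReal_eq_zero, not_le, hpq.pos]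
  have hq0 : ENNReal.ofReal q ≠ 0 := by
    simp [ENNReal.ofReal_eq_zero, not_le, hpq.symm.pos]
  rw [eLpNorm_eq_lintegral_rpow_enorm_toReal hp0 ENNReal.ofReal_ne_top,
      eLpNorm_eq_lintegral_rpow_enorm_toReal hq0 ENNReal.ofReal_ne_top,
      ENNReal.toReal_ofReal hpq.nonneg, ENNReal.toReal_ofReal hpq.symm.nonneg]
  exact H

/-- Tail smallness of the `L^p` norm of a fixed measurable function. -/
lemma aux_tail {p : ℝ} (hp : 0 < p) (f : E3 → ℝ) (hf : Measurable f)
    (hfin : eLpNorm f (ENNReal.ofReal p) volume < ⊤) {ε : ℝ≥0∞} (hε : 0 < ε) :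
    ∃ T : ℝ, 0 < T ∧
      eLpNorm ({y : E3 | T ≤ ‖y‖}.indicator f) (ENNReal.ofReal p) volume < ε := by
  have hp0 : ENNReal.ofReal p ≠ 0 := by simp [ENNReal.ofReal_eq_zero, not_le, hp]
  have hptop : ENNReal.ofReal p ≠ ⊤ := ENNReal.ofReal_ne_top
  have htr : (ENNReal.ofReal p).toReal = p := ENNReal.toReal_ofReal hp.le
  set ε' : ℝ≥0∞ := min ε 1 with hε'def
  have hε'0 : 0 < ε' := lt_min hε zero_lt_one
  have hε'top : ε' ≠ ⊤ := ne_of_lt (lt_of_le_of_lt (min_le_right _ _) (by norm_num))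
  have hε'p : 0 < ε' ^ p := ENNReal.rpow_pos hε'0 hε'top
  -- measurable tail sets
  have hSmeas : ∀ T : ℝ, MeasurableSet {y : E3 | T ≤ ‖y‖} :=
    fun T => measurableSet_le measurable_const measurable_norm
  -- dominated convergence
  set F : ℕ → E3 → ℝ≥0∞ :=
    fun n => ({y : E3 | (n : ℝ) ≤ ‖y‖}).indicator (fun y => (‖f y‖₊ : ℝ≥0∞) ^ p) with hFdef
  have hFmeas : ∀ n, Measurable (F n) :=
    fun n => (hf.nnnorm.coe_nnreal_ennreal.pow_const p).indicator (hSmeas _)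
  have hbound : ∀ n, F n ≤ᵐ[volume] fun y => (‖f y‖₊ : ℝ≥0∞) ^ p :=
    fun n => Eventually.of_forall fun y => Set.indicator_le_self _ _ y
  have hbdd_int : (∫⁻ y : E3, (‖f y‖₊ : ℝ≥0∞) ^ p) ≠ ⊤ := by
    have := (eLpNorm_lt_top_iff_lintegral_rpow_enorm_lt_top hp0 hptop).1 hfin
    rw [htr] at this
    exact this.ne
  have hlim0 : ∀ᵐ y : E3 ∂volume, Tendsto (fun n => F n y) atTop (nhds 0) := by
    refine Eventually.of_forall fun y => ?_
    obtain ⟨n₀, hn₀⟩ := exists_nat_gt ‖y‖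
    refine tendsto_atTop_of_eventually_const (i₀ := n₀) fun n hn => ?_
    apply Set.indicator_of_notMem
    simp only [Set.mem_setOf_eq, not_le]
    exact lt_of_lt_of_le hn₀ (by exact_mod_cast hn)
  have htends : Tendsto (fun n => ∫⁻ y, F n y) atTop (nhds 0) := by
    have := tendsto_lintegral_of_dominated_convergence (μ := volume)
      (F := F) (f := fun _ => 0) _ hFmeas hbound hbdd_int hlim0
    simpa using this
  have hev : ∀ᶠ n : ℕ in atTop, (∫⁻ y, F n y) < ε' ^ p ∧ 1 ≤ n := by
    filter_upwards [htends.eventually_lt_const hε'p, eventually_ge_atTop 1] with n h1 h2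
    exact ⟨h1, h2⟩
  obtain ⟨n, hn, hn1⟩ := hev.exists
  refine ⟨n, by exact_mod_cast hn1, ?_⟩
  have hnorm : eLpNorm ({y : E3 | (n : ℝ) ≤ ‖y‖}.indicator f) (ENNReal.ofReal p) volume
      = (∫⁻ y, F n y) ^ (1 / p) := by
    rw [eLpNorm_eq_lintegral_rpow_enorm_toReal hp0 hptop, htr]
    congr 1
    refine lintegral_congr fun y => ?_
    by_cases hy : y ∈ {y : E3 | (n : ℝ) ≤ ‖y‖}
    · rw [hFdef]
      simp only [Set.indicator_of_mem hy]
      rfl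
    · rw [hFdef]
      simp only [Set.indicator_of_notMem hy, enorm_zero]
      rw [ENNReal.zero_rpow_of_pos hp]
  rw [hnorm]
  calc (∫⁻ y, F n y) ^ (1 / p) < (ε' ^ p) ^ (1 / p) :=
        ENNReal.rpow_lt_rpow hn (by positivity)
    _ = ε' := by
        rw [← ENNReal.rpow_mul, mul_one_div, div_self hp.ne', ENNReal.rpow_one]
    _ ≤ ε := min_le_left _ _

/-- uniform decay at infinity of the convolutions `w_i = K * h_i`
with a Bessel-type kernel, for right-hand sides uniformly bounded in `L^∞`
and convergent in `L^{6/(3-2s)}`. -/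
theorem uniform_decay_of_convolutions (s C M : ℝ) (hs : s ∈ Ioo (0 : ℝ) 1)
    (hC : 0 < C) (hM : 0 < M)
    (K : E3 → ℝ) (hKnonneg : ∀ x, 0 ≤ K x) (hKmeas : Measurable K)
    (hKLp : MemLp K (ENNReal.ofReal (6 / (3 + 2 * s))) volume)
    (hKdecay : ∀ x : E3, x ≠ 0 → K x ≤ C * ‖x‖ ^ (-(3 + 2 * s)))
    (h : ℕ → E3 → ℝ) (hmeas : ∀ i, Measurable (h i))
    (hbdd : ∀ i, ∀ y, |h i y| ≤ M)
    (hLp : ∀ i, MemLp (h i) (ENNReal.ofReal (6 / (3 - 2 * s))) volume)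
    (hlim : E3 → ℝ) (hlimLp : MemLp hlim (ENNReal.ofReal (6 / (3 - 2 * s))) volume)
    (hconv : Tendsto
      (fun i => eLpNorm (fun y => h i y - hlim y) (ENNReal.ofReal (6 / (3 - 2 * s))) volume)
      atTop (nhds 0)) :
    ∀ δ > (0 : ℝ), ∃ R > (0 : ℝ), ∀ i : ℕ, ∀ z : E3, R ≤ ‖z‖ →
      (∫ y : E3, K (z - y) * |h i y|) ≤ δ := by
  obtain ⟨hs0, hs1⟩ := hs
  intro δ hδ
  have h3m : (0:ℝ) < 3 - 2*s := by linarith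
  have h3p : (0:ℝ) < 3 + 2*s := by linarith
  set P : ℝ := 6 / (3 - 2*s) with hPdef
  set P' : ℝ := 6 / (3 + 2*s) with hP'def
  have hPpos : 0 < P := by positivity
  have hP'pos : 0 < P' := by positivity
  have hpq : P'.HolderConjugate P := by
    rw [Real.holderConjugate_iff]
    constructor
    · rw [hP'def, lt_div_iff₀ h3p]; linarith
    · rw [hPdef, hP'def]
      rw [inv_div, inv_div]
      rw [div_add_div _ _ (by norm_num : (6:ℝ) ≠ 0) (by norm_num : (6:ℝ) ≠ 0)]
      norm_num
      ring_nf
  set q : ℝ≥0∞ := ENNReal.ofReal P with hqdef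
  set q' : ℝ≥0∞ := ENNReal.ofReal P' with hq'def
  have hq1 : 1 ≤ q := by
    rw [hqdef]
    exact ENNReal.one_le_ofReal.2 (Real.holderConjugate_iff.1 hpq.symm).1.le
  -- the full norm of K
  set A : ℝ≥0∞ := eLpNorm K q' volume with hAdef
  have hAtop : A ≠ ⊤ := hKLp.2.ne
  -- parameters
  have hδ2 : (0:ℝ≥0∞) < ENNReal.ofReal δ / 2 := by
    apply ENNReal.div_pos
    · simp [ENNReal.ofReal_eq_zero, not_le, hδ]
    · norm_num
  set εh : ℝ≥0∞ := (ENNReal.ofReal δ / 2) / (A + 1) with hεhdef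
  have hεh0 : 0 < εh := by
    apply ENNReal.div_pos hδ2.ne'
    exact ENNReal.add_ne_top.2 ⟨hAtop, by norm_num⟩
  have hεh2 : 0 < εh / 2 := ENNReal.div_pos hεh0.ne' (by norm_num)
  -- N from convergence
  have hev : ∀ᶠ i in atTop,
      eLpNorm (fun y => h i y - hlim y) q volume < min 1 (εh / 2) := by
    exact hconv.eventually_lt_const (lt_min zero_lt_one hεh2)
  obtain ⟨N, hN⟩ := eventually_atTop.1 hev
  -- uniform bound on the norms of h i
  set B : ℝ≥0∞ := eLpNorm hlim q volume + 1 + ∑ i ∈ Finset.range N, eLpNorm (h i) q volume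
    with hBdef
  have hBtop : B ≠ ⊤ := by
    apply ENNReal.add_ne_top.2
    constructor
    · exact ENNReal.add_ne_top.2 ⟨hlimLp.2.ne, by norm_num⟩
    · rw [ne_eq, ENNReal.sum_eq_top]
      push_neg
      exact fun i _ => (hLp i).2.ne
  have hBbound : ∀ i, eLpNorm (h i) q volume ≤ B := by
    intro i
    rcases lt_or_ge i N with hiN | hiN
    · calc eLpNorm (h i) q volume
          ≤ ∑ j ∈ Finset.range N, eLpNorm (h j) q volume :=
            Finset.single_le_sum (f := fun j => eLpNorm (h j) q volume)
              (fun j _ => zero_le) (Finset.mem_range.2 hiN)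
        _ ≤ B := le_add_self
    · have heq : h i = (fun y => hlim y) + fun y => h i y - hlim y := by
        funext y; simp
      calc eLpNorm (h i) q volume
          = eLpNorm ((fun y => hlim y) + fun y => h i y - hlim y) q volume := by rw [← heq]
        _ ≤ eLpNorm hlim q volume + eLpNorm (fun y => h i y - hlim y) q volume :=
            eLpNorm_add_le hlimLp.1
              ((hmeas i).aestronglyMeasurable.sub hlimLp.1) hq1
        _ ≤ eLpNorm hlim q volume + 1 :=
            add_le_add_right (le_of_lt (lt_of_lt_of_le (hN i hiN) (min_le_left _ _))) _
        _ ≤ B := le_self_add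
  set εK : ℝ≥0∞ := (ENNReal.ofReal δ / 2) / (B + 1) with hεKdef
  have hεK0 : 0 < εK := by
    apply ENNReal.div_pos hδ2.ne'
    exact ENNReal.add_ne_top.2 ⟨hBtop, by norm_num⟩
  -- tail of K
  obtain ⟨r, hr0, hrK⟩ := aux_tail hP'pos K hKmeas hKLp.2 hεK0
  -- tail of hlim (measurable representative)
  set g : E3 → ℝ := hlimLp.1.mk hlim with hgdef
  have hgmeas : Measurable g := hlimLp.1.stronglyMeasurable_mk.measurable
  have hgae : hlim =ᵐ[volume] g := hlimLp.1.ae_eq_mk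
  have hgfin : eLpNorm g q volume < ⊤ := by
    rw [← eLpNorm_congr_ae hgae]; exact hlimLp.2
  obtain ⟨T₀, hT₀0, hT₀⟩ := aux_tail hPpos g hgmeas hgfin hεh2
  -- tails of h i for i < N
  have htails : ∀ i, ∃ T : ℝ, 0 < T ∧
      eLpNorm ({y : E3 | T ≤ ‖y‖}.indicator (h i)) q volume < εh :=
    fun i => aux_tail hPpos (h i) (hmeas i) (hLp i).2 hεh0
  choose Ts hTs0 hTs using htails
  set T : ℝ := T₀ + ∑ i ∈ Finset.range N, Ts i with hTdef
  have hTsum0 : (0:ℝ) ≤ ∑ i ∈ Finset.range N, Ts i :=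
    Finset.sum_nonneg fun i _ => (hTs0 i).le
  have hT0 : 0 < T := by positivity
  -- monotonicity of the tail seminorms
  have hmono : ∀ (f : E3 → ℝ) (T1 T2 : ℝ), T1 ≤ T2 →
      eLpNorm ({y : E3 | T2 ≤ ‖y‖}.indicator f) q volume ≤
      eLpNorm ({y : E3 | T1 ≤ ‖y‖}.indicator f) q volume := by
    intro f T1 T2 h12
    have hinter : {y : E3 | T2 ≤ ‖y‖} ∩ {y : E3 | T1 ≤ ‖y‖} = {y : E3 | T2 ≤ ‖y‖} :=
      Set.inter_eq_left.2 fun y hy => le_trans h12 hy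
    calc eLpNorm ({y : E3 | T2 ≤ ‖y‖}.indicator f) q volume
        = eLpNorm ({y : E3 | T2 ≤ ‖y‖}.indicator ({y : E3 | T1 ≤ ‖y‖}.indicator f)) q volume := by
          rw [Set.indicator_indicator, hinter]
      _ ≤ eLpNorm ({y : E3 | T1 ≤ ‖y‖}.indicator f) q volume := eLpNorm_indicator_le _
  -- uniform tail bound for the h i
  have huniftail : ∀ i, eLpNorm ({y : E3 | T ≤ ‖y‖}.indicator (h i)) q volume ≤ εh := by
    intro i
    rcases lt_or_ge i N with hiN | hiN
    · have hTi : Ts i ≤ T := by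
        have : Ts i ≤ ∑ j ∈ Finset.range N, Ts j :=
          Finset.single_le_sum (fun j _ => (hTs0 j).le) (Finset.mem_range.2 hiN)
        linarith
      exact le_trans (hmono _ _ _ hTi) (hTs i).le
    · -- split h i = (h i - hlim) + hlim on the tail set
      set S : Set E3 := {y : E3 | T ≤ ‖y‖} with hSdef
      have hsplit : S.indicator (h i)
          = S.indicator (fun y => h i y - hlim y) + S.indicator hlim := by
        funext y
        by_cases hy : y ∈ S
        · simp [Set.indicator_of_mem hy]
        · simp [Set.indicator_of_notMem hy]
      have hSm : MeasurableSet S := measurableSet_le measurable_const measurable_norm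
      have h1 : eLpNorm (S.indicator fun y => h i y - hlim y) q volume ≤ εh / 2 :=
        le_trans (eLpNorm_indicator_le _)
          (le_of_lt (lt_of_lt_of_le (hN i hiN) (min_le_right _ _)))
      have h2 : eLpNorm (S.indicator hlim) q volume ≤ εh / 2 := by
        have hae2 : S.indicator hlim =ᵐ[volume] S.indicator g := by
          filter_upwards [hgae] with y hy
          by_cases hyS : y ∈ S
          · simp [Set.indicator_of_mem hyS, hy]
          · simp [Set.indicator_of_notMem hyS]
        rw [eLpNorm_congr_ae hae2]
        have hT₀T : T₀ ≤ T := by linarith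
        exact le_trans (hmono _ _ _ hT₀T) hT₀.le
      calc eLpNorm (S.indicator (h i)) q volume
          ≤ eLpNorm (S.indicator fun y => h i y - hlim y) q volume
            + eLpNorm (S.indicator hlim) q volume := by
            rw [hsplit]
            exact eLpNorm_add_le
              (((hmeas i).aestronglyMeasurable.sub hlimLp.1).indicator hSm)
              (hlimLp.1.indicator hSm) hq1
        _ ≤ εh / 2 + εh / 2 := add_le_add h1 h2
        _ = εh := ENNReal.add_halves _
  -- the radius
  refine ⟨r + T, by linarith, ?_⟩
  intro i z hz
  set S1 : Set E3 := {x : E3 | r ≤ ‖x‖} with hS1def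
  set S2 : Set E3 := {y : E3 | T ≤ ‖y‖} with hS2def
  have hS1m : MeasurableSet S1 := measurableSet_le measurable_const measurable_norm
  have hS2m : MeasurableSet S2 := measurableSet_le measurable_const measurable_norm
  -- the key bound on the lintegral
  have key : (∫⁻ y : E3, (‖K (z - y)‖₊ : ℝ≥0∞) * ‖h i y‖₊) ≤ ENNReal.ofReal δ := by
    have ptwise : ∀ y : E3, (‖K (z - y)‖₊ : ℝ≥0∞) * ‖h i y‖₊ ≤
        (‖K (z - y)‖₊ : ℝ≥0∞) * ‖S2.indicator (h i) y‖₊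
          + (‖S1.indicator K (z - y)‖₊ : ℝ≥0∞) * ‖h i y‖₊ := by
      intro y
      by_cases hy : r ≤ ‖z - y‖
      · have : S1.indicator K (z - y) = K (z - y) :=
          Set.indicator_of_mem (show (z - y) ∈ S1 from hy) K
        rw [this]
        exact le_add_self
      · push_neg at hy
        have hyT : y ∈ S2 := by
          have htri : ‖z‖ ≤ ‖z - y‖ + ‖y‖ := by
            calc ‖z‖ = ‖(z - y) + y‖ := by rw [sub_add_cancel]
              _ ≤ ‖z - y‖ + ‖y‖ := norm_add_le _ _
          simp only [hS2def, Set.mem_setOf_eq]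
          linarith
        have : S2.indicator (h i) y = h i y := Set.indicator_of_mem hyT _
        rw [this]
        exact le_self_add
    have hmeas1 : Measurable fun y : E3 => (‖K (z - y)‖₊ : ℝ≥0∞) * ‖S2.indicator (h i) y‖₊ :=
      ((hKmeas.comp (measurable_const.sub measurable_id)).nnnorm.coe_nnreal_ennreal).mul
        (((hmeas i).indicator hS2m).nnnorm.coe_nnreal_ennreal)
    calc (∫⁻ y : E3, (‖K (z - y)‖₊ : ℝ≥0∞) * ‖h i y‖₊)
        ≤ ∫⁻ y : E3, ((‖K (z - y)‖₊ : ℝ≥0∞) * ‖S2.indicator (h i) y‖₊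
            + (‖S1.indicator K (z - y)‖₊ : ℝ≥0∞) * ‖h i y‖₊) :=
          lintegral_mono ptwise
      _ = (∫⁻ y : E3, (‖K (z - y)‖₊ : ℝ≥0∞) * ‖S2.indicator (h i) y‖₊)
            + ∫⁻ y : E3, (‖S1.indicator K (z - y)‖₊ : ℝ≥0∞) * ‖h i y‖₊ :=
          lintegral_add_left hmeas1 _
      _ ≤ eLpNorm K q' volume * eLpNorm (S2.indicator (h i)) q volume
            + eLpNorm (S1.indicator K) q' volume * eLpNorm (h i) q volume := by
          apply add_le_add
          · exact aux_holder hpq K (S2.indicator (h i)) hKmeas ((hmeas i).indicator hS2m) z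
          · exact aux_holder hpq (S1.indicator K) (h i) (hKmeas.indicator hS1m) (hmeas i) z
      _ ≤ (A + 1) * εh + εK * (B + 1) := by
          apply add_le_add
          · exact mul_le_mul' le_self_add (huniftail i)
          · exact mul_le_mul' hrK.le (le_trans (hBbound i) le_self_add)
      _ = ENNReal.ofReal δ / 2 + ENNReal.ofReal δ / 2 := by
          rw [hεhdef, hεKdef]
          rw [ENNReal.mul_div_cancel (by simp) (ENNReal.add_ne_top.2 ⟨hAtop, by norm_num⟩)]
          rw [ENNReal.div_mul_cancel (by simp) (ENNReal.add_ne_top.2 ⟨hBtop, by norm_num⟩)]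
      _ = ENNReal.ofReal δ := ENNReal.add_halves _
  -- transfer back to the Bochner integral
  have hnn : 0 ≤ᵐ[volume] fun y : E3 => K (z - y) * |h i y| :=
    Eventually.of_forall fun y => mul_nonneg (hKnonneg _) (abs_nonneg _)
  have hasm : AEStronglyMeasurable (fun y : E3 => K (z - y) * |h i y|) volume :=
    ((hKmeas.comp (measurable_const.sub measurable_id)).mul (hmeas i).abs).aestronglyMeasurable
  rw [integral_eq_lintegral_of_nonneg_ae hnn hasm]
  refine ENNReal.toReal_le_of_le_ofReal hδ.le ?_
  refine le_trans (le_of_eq (lintegral_congr fun y => ?_)) key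
  rw [ENNReal.ofReal_mul (hKnonneg _)]
  rw [← Real.enorm_eq_ofReal (hKnonneg _), ← Real.enorm_eq_ofReal (abs_nonneg _)]
  rw [Real.enorm_abs]
  rfl
end
end
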